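/- Let (G,M,I) be a finite formal context and let Ĩ ⊆ I be a subset of maximum cardinality among all subsets of I that induce a bipartite subgraph of the incompatibility graph of (G,M,I). If the formal context (G,M,Ĩ) admits an ordinal two-factorization F̃1, F̃2, then this factorization is maximal for (G,M,I): for every pair of Ferrers relations F1, F2 ⊆ I, one has |F1 ∪ F2| ≤ |Ĩ| = |F̃1 ∪ F̃2|. -/

import Mathlib

set_option linter.unnecessarySimpa false

/-- A Ferrers relation: whenever `(g,m) ∈ F` and `(h,n) ∈ F`,
then `(g,n) ∈ F` or `(h,m) ∈ F`. -/
def IsFerrers {G M : Type*} (F : Set (G × M)) : Prop :=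
  ∀ g h : G, ∀ m n : M, (g, m) ∈ F → (h, n) ∈ F → (g, n) ∈ F ∨ (h, m) ∈ F

/-- Two pairs `p, q ∈ I` are incompatible if `(p.1, q.2) ∉ I` and `(q.1, p.2) ∉ I`. -/
def Incompatible {G M : Type*} (I : Set (G × M)) (p q : G × M) : Prop :=
  p ∈ I ∧ q ∈ I ∧ (p.1, q.2) ∉ I ∧ (q.1, p.2) ∉ I

/-- The subgraph of the incompatibility graph of the context `(G, M, I)` induced
by a vertex set `J ⊆ I`: vertices are the elements of `J`, with an edge between
each pair of elements incompatible with respect to `I`. -/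
def IncompSubgraph {G M : Type*} (I J : Set (G × M)) : SimpleGraph J where
  Adj p q := Incompatible I p.1 q.1
  symm := ⟨fun _ _ h => ⟨h.2.1, h.1, h.2.2.2, h.2.2.1⟩⟩
  loopless := ⟨fun p h => h.2.2.1 (by simpa using h.1)⟩

/-- Two elements of a Ferrers relation contained in `I` are never incompatible. -/
lemma ferrers_not_incompatible {G M : Type*} {I F : Set (G × M)}
    (hF : IsFerrers F) (hFI : F ⊆ I) {p q : G × M}
    (hp : p ∈ F) (hq : q ∈ F) : ¬ Incompatible I p q := by
  rintro ⟨_, _, h1, h2⟩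
  rcases hF p.1 q.1 p.2 q.2 (by simpa using hp) (by simpa using hq) with h | h
  · exact h1 (hFI h)
  · exact h2 (hFI h)

theorem max_bipartite_subset_gives_maximal_factorization {G M : Type*}
    [Finite G] [Finite M]
    (I Itil : Set (G × M)) (hsub : Itil ⊆ I)
    (hbip : (IncompSubgraph I Itil).Colorable 2)
    (hmax : ∀ J : Set (G × M), J ⊆ I → (IncompSubgraph I J).Colorable 2 →
      J.ncard ≤ Itil.ncard)
    (Ft1 Ft2 : Set (G × M)) (hFt1 : IsFerrers Ft1) (hFt2 : IsFerrers Ft2)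
    (hfact : Ft1 ∪ Ft2 = Itil) :
    ∀ F1 F2 : Set (G × M), IsFerrers F1 → IsFerrers F2 → F1 ⊆ I → F2 ⊆ I →
      (F1 ∪ F2).ncard ≤ Itil.ncard ∧ Itil.ncard = (Ft1 ∪ Ft2).ncard := by
  intro F1 F2 h1 h2 hF1I hF2I
  refine ⟨?_, by rw [hfact]⟩
  apply hmax _ (Set.union_subset hF1I hF2I)
  classical
  refine ⟨fun p => if (p : G × M) ∈ F1 then 0 else 1, ?_⟩
  rintro p q hadj
  show _ ≠ _
  by_cases hp : (p : G × M) ∈ F1 <;> by_cases hq : (q : G × M) ∈ F1 <;>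
    simp [hp, hq]
  · exact ferrers_not_incompatible h1 hF1I hp hq hadj
  · have hp2 : (p : G × M) ∈ F2 := p.2.resolve_left hp
    have hq2 : (q : G × M) ∈ F2 := q.2.resolve_left hq
    exact ferrers_not_incompatible h2 hF2I hp2 hq2 hadj
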